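/- For every L ≥ 2, Δ > 1 (with q ∈ (0,1) determined by Δ = (q + q^{-1})/2), and every 0 ≤ n ≤ L, the kink state ψ^{+-}_{[1,L]}(n) is a ground state of the XXZ Hamiltonian with kink boundary fields H^{+-}_{[1,L]} = −∑_{x=1}^{L-1} [Δ^{-1}(S¹_x S¹_{x+1} + S²_x S²_{x+1}) + (S³_x S³_{x+1} − 1/4)] − A(Δ)(S³_1 − S³_L): namely H^{+-}_{[1,L]} is positive semidefinite and H^{+-}_{[1,L]} ψ^{+-}_{[1,L]}(n) = 0. Similarly, the antikink state ψ^{-+}_{[1,L]}(n) satisfies H^{-+}_{[1,L]} ψ^{-+}_{[1,L]}(n) = 0 with H^{-+}_{[1,L]} = −∑_{x=1}^{L-1} [Δ^{-1}(S¹_x S¹_{x+1} + S²_x S²_{x+1}) + (S³_x S³_{x+1} − 1/4)] + A(Δ)(S³_1 − S³_L) positive semidefinite. -/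

import Mathlib

open scoped ComplexOrder

noncomputable section

/-- Configurations of a spin-1/2 chain of `L` sites: `0` = spin up, `1` = spin down. -/
abbrev Config (L : ℕ) := Fin L → Fin 2

/-- The spin-1/2 matrix `S¹` (one half the first Pauli matrix). -/
def S1 : Matrix (Fin 2) (Fin 2) ℂ := (1/2 : ℂ) • !![0, 1; 1, 0]

/-- The spin-1/2 matrix `S²` (one half the second Pauli matrix). -/
def S2 : Matrix (Fin 2) (Fin 2) ℂ := (1/2 : ℂ) • !![0, -Complex.I; Complex.I, 0]

/-- The spin-1/2 matrix `S³` (one half the third Pauli matrix). -/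
def S3 : Matrix (Fin 2) (Fin 2) ℂ := (1/2 : ℂ) • !![1, 0; 0, -1]

/-- A one-site matrix `M` acting on site `x` (0-indexed) of the chain of `L` sites,
as the identity on all the other sites (and the identity altogether if `x ≥ L`). -/
def siteOp (L : ℕ) (M : Matrix (Fin 2) (Fin 2) ℂ) (x : ℕ) :
    Matrix (Config L) (Config L) ℂ := fun σ τ =>
  if h : x < L then
    (if ∀ y : Fin L, (y : ℕ) ≠ x → σ y = τ y then M (σ ⟨x, h⟩) (τ ⟨x, h⟩) else 0)
  else (if σ = τ then 1 else 0)

/-- `A(Δ) = (1/2)√(1 − Δ⁻²)`. -/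
def Acoef (Δ : ℝ) : ℝ := (1/2) * Real.sqrt (1 - Δ⁻¹ ^ 2)

/-- Total third component of spin, `S³_tot = ∑ₓ S³ₓ`. -/
def S3tot (L : ℕ) : Matrix (Config L) (Config L) ℂ := ∑ x ∈ Finset.range L, siteOp L S3 x

/-- The bulk XXZ Hamiltonian `−∑ₓ [Δ⁻¹(S¹ₓS¹ₓ₊₁ + S²ₓS²ₓ₊₁) + (S³ₓS³ₓ₊₁ − 1/4)]`. -/
def XXZbulk (L : ℕ) (Δ : ℝ) : Matrix (Config L) (Config L) ℂ :=
  -(∑ x ∈ Finset.range (L - 1),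
      ((Δ⁻¹ : ℂ) • (siteOp L S1 x * siteOp L S1 (x+1) + siteOp L S2 x * siteOp L S2 (x+1))
        + (siteOp L S3 x * siteOp L S3 (x+1) - (1/4 : ℂ) • 1)))

/-- The XXZ Hamiltonian with `++` boundary fields. -/
def Hpp (L : ℕ) (Δ : ℝ) : Matrix (Config L) (Config L) ℂ :=
  XXZbulk L Δ - (Acoef Δ : ℂ) • (siteOp L S3 0 + siteOp L S3 (L-1))

/-- The XXZ Hamiltonian with kink (`+-`) boundary fields. -/
def Hpm (L : ℕ) (Δ : ℝ) : Matrix (Config L) (Config L) ℂ :=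
  XXZbulk L Δ - (Acoef Δ : ℂ) • (siteOp L S3 0 - siteOp L S3 (L-1))

/-- The XXZ Hamiltonian with antikink (`-+`) boundary fields. -/
def Hmp (L : ℕ) (Δ : ℝ) : Matrix (Config L) (Config L) ℂ :=
  XXZbulk L Δ + (Acoef Δ : ℂ) • (siteOp L S3 0 - siteOp L S3 (L-1))

/-- The sector `H_{L,n}`: the eigenspace of `S³_tot` with eigenvalue `L/2 − n`. -/
def sector (L n : ℕ) : Submodule ℂ (EuclideanSpace ℂ (Config L)) :=
  Module.End.eigenspace (Matrix.toEuclideanLin (S3tot L)) ((L : ℂ)/2 - n)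

/-- The set of down-spin sites of a configuration. -/
def downSet {ℓ : ℕ} (σ : Config ℓ) : Finset (Fin ℓ) := Finset.univ.filter (fun i => σ i = 1)

/-- The kink state `ψ^{+-}` with `m` down spins on a chain of `ℓ` sites (representing the
interval `[a,b]`, `ℓ = b−a+1`, site `i` ↔ `a+i`, so the weight `q^{b+1−x}` becomes `q^{ℓ−i}`):
the configuration with down spins at `x₁ < ⋯ < x_m` has coefficient `q^{∑ₖ (b+1−x_k)}`. -/
def kink (ℓ : ℕ) (q : ℝ) (m : ℕ) : Config ℓ → ℂ := fun σ =>
  if (downSet σ).card = m then (q : ℂ) ^ (∑ i ∈ downSet σ, (ℓ - (i : ℕ))) else 0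

/-- The antikink state `ψ^{-+}` with `m` down spins on a chain of `ℓ` sites (the weight
`q^{x+1−a}` becomes `q^{i+1}`). -/
def antikink (ℓ : ℕ) (q : ℝ) (m : ℕ) : Config ℓ → ℂ := fun σ =>
  if (downSet σ).card = m then (q : ℂ) ^ (∑ i ∈ downSet σ, ((i : ℕ) + 1)) else 0

/-- The tensor product of a state on the first `x` sites and a state on the last `L − x`
sites, as a state of the chain of `L` sites. -/
def tensorSplit {L : ℕ} (x : ℕ) (hx : x ≤ L) (f : Config x → ℂ) (g : Config (L - x) → ℂ) :
    EuclideanSpace ℂ (Config L) :=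
  (WithLp.equiv 2 (Config L → ℂ)).symm (fun σ =>
    f (fun i => σ ⟨i, lt_of_lt_of_le i.2 hx⟩) *
    g (fun j => σ ⟨x + (j : ℕ), by have := j.isLt; omega⟩))

/-- The droplet state `ξ_{L,n}(x) = ψ^{+-}_{[1,x]}(⌊n/2⌋) ⊗ ψ^{-+}_{[x+1,L]}(⌈n/2⌉)`. -/
def droplet (L : ℕ) (q : ℝ) (n x : ℕ) (hx : x ≤ L) : EuclideanSpace ℂ (Config L) :=
  tensorSplit x hx (kink x q (n / 2)) (antikink (L - x) q ((n + 1) / 2))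

/-- The index set `⌊n/2⌋ ≤ x ≤ L − ⌈n/2⌉` for the droplet states. -/
def dropletIdx (L n : ℕ) : Finset ℕ := Finset.Icc (n / 2) (L - (n + 1) / 2)

/-- The family of droplet states `ξ_{L,n}(x)`, `⌊n/2⌋ ≤ x ≤ L − ⌈n/2⌉`. -/
def dropletFamily (L : ℕ) (q : ℝ) (n : ℕ) : dropletIdx L n → EuclideanSpace ℂ (Config L) :=
  fun x => droplet L q n x ((Finset.mem_Icc.mp x.2).2.trans (Nat.sub_le _ _))

/-- The droplet subspace `K_{L,n}`. -/
def dropletSpace (L : ℕ) (q : ℝ) (n : ℕ) : Submodule ℂ (EuclideanSpace ℂ (Config L)) :=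
  Submodule.span ℂ (Set.range (dropletFamily L q n))

/-- The orthogonal projection onto a subspace, as an operator on the whole space. -/
def projOp {ι : Type*} [Fintype ι] (K : Submodule ℂ (EuclideanSpace ℂ ι)) :
    EuclideanSpace ℂ ι →L[ℂ] EuclideanSpace ℂ ι :=
  K.subtypeL.comp K.orthogonalProjectionOnto

/-- The all-spins-up vector. -/
def allUp (L : ℕ) : Config L → ℂ := fun σ => if σ = (fun _ => 0) then 1 else 0

end
section KAux

open Matrix

noncomputable section

namespace KA

/-- Two-site operator entries. -/
def two (M N : Matrix (Fin 2) (Fin 2) ℂ) :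
    Matrix (Fin 2 × Fin 2) (Fin 2 × Fin 2) ℂ := fun p p' => M p.1 p'.1 * N p.2 p'.2

/-- Embedding of a two-site operator at bond `(x, x+1)`. -/
def bondOp (L x : ℕ) (K : Matrix (Fin 2 × Fin 2) (Fin 2 × Fin 2) ℂ) :
    Matrix (Config L) (Config L) ℂ := fun σ τ =>
  if h : x + 1 < L then
    (if ∀ y : Fin L, (y : ℕ) ≠ x → (y : ℕ) ≠ x + 1 → σ y = τ y then
      K (σ ⟨x, by omega⟩, σ ⟨x+1, h⟩) (τ ⟨x, by omega⟩, τ ⟨x+1, h⟩) else 0)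
  else 0

/-- Replace the values of a configuration at the two bond sites. -/
def upd2 {L x : ℕ} (h : x + 1 < L) (σ : Config L) (p : Fin 2 × Fin 2) : Config L :=
  fun y => if (y : ℕ) = x then p.1 else if (y : ℕ) = x + 1 then p.2 else σ y

lemma upd2_fst {L x : ℕ} (h : x + 1 < L) (σ : Config L) (p : Fin 2 × Fin 2) :
    upd2 h σ p ⟨x, by omega⟩ = p.1 := by
  simp [upd2]

lemma upd2_snd {L x : ℕ} (h : x + 1 < L) (σ : Config L) (p : Fin 2 × Fin 2) :
    upd2 h σ p ⟨x+1, h⟩ = p.2 := by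
  simp [upd2]

lemma upd2_other {L x : ℕ} (h : x + 1 < L) (σ : Config L) (p : Fin 2 × Fin 2) (y : Fin L)
    (h1 : (y : ℕ) ≠ x) (h2 : (y : ℕ) ≠ x + 1) : upd2 h σ p y = σ y := by
  simp [upd2, h1, h2]

lemma upd2_inj {L x : ℕ} (h : x + 1 < L) (σ : Config L) : Function.Injective (upd2 h σ) := by
  intro p p' hpp
  have h1 := congrFun hpp ⟨x, by omega⟩
  have h2 := congrFun hpp ⟨x+1, h⟩
  rw [upd2_fst, upd2_fst] at h1
  rw [upd2_snd, upd2_snd] at h2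
  exact Prod.ext h1 h2

lemma sum_eq_sum_upd2 {L x : ℕ} (h : x + 1 < L) (σ : Config L) (f : Config L → ℂ)
    (hf : ∀ ρ : Config L,
      ¬ (∀ y : Fin L, (y : ℕ) ≠ x → (y : ℕ) ≠ x + 1 → ρ y = σ y) → f ρ = 0) :
    ∑ ρ : Config L, f ρ = ∑ p : Fin 2 × Fin 2, f (upd2 h σ p) := by
  classical
  refine ((Finset.sum_subset (Finset.subset_univ (Finset.univ.image (upd2 h σ))) ?_).symm.trans
    (Finset.sum_image (fun p _ p' _ hpp => upd2_inj h σ hpp)))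
  intro ρ _ hρ
  refine hf ρ fun hmatch => hρ ?_
  rw [Finset.mem_image]
  refine ⟨(ρ ⟨x, by omega⟩, ρ ⟨x+1, h⟩), Finset.mem_univ _, ?_⟩
  funext y
  by_cases h1 : (y : ℕ) = x
  · have hy : y = ⟨x, by omega⟩ := Fin.ext h1
    rw [hy, upd2_fst]
  · by_cases h2 : (y : ℕ) = x + 1
    · have hy : y = ⟨x+1, h⟩ := Fin.ext h2
      rw [hy, upd2_snd]
    · rw [upd2_other h σ _ y h1 h2, hmatch y h1 h2]

lemma bondOp_apply {L x : ℕ} (h : x + 1 < L) (K : Matrix (Fin 2 × Fin 2) (Fin 2 × Fin 2) ℂ)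
    (σ τ : Config L) :
    bondOp L x K σ τ =
      if ∀ y : Fin L, (y : ℕ) ≠ x → (y : ℕ) ≠ x + 1 → σ y = τ y then
        K (σ ⟨x, by omega⟩, σ ⟨x+1, h⟩) (τ ⟨x, by omega⟩, τ ⟨x+1, h⟩) else 0 := by
  simp only [bondOp, dif_pos h]

lemma bondOp_add {L x : ℕ} (K K' : Matrix (Fin 2 × Fin 2) (Fin 2 × Fin 2) ℂ) :
    bondOp L x (K + K') = bondOp L x K + bondOp L x K' := by
  ext σ τ
  simp only [bondOp, Matrix.add_apply]
  split_ifs <;> simp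

lemma bondOp_neg {L x : ℕ} (K : Matrix (Fin 2 × Fin 2) (Fin 2 × Fin 2) ℂ) :
    bondOp L x (-K) = -(bondOp L x K) := by
  ext σ τ
  simp only [bondOp, Matrix.neg_apply]
  split_ifs <;> simp

lemma bondOp_sub {L x : ℕ} (K K' : Matrix (Fin 2 × Fin 2) (Fin 2 × Fin 2) ℂ) :
    bondOp L x (K - K') = bondOp L x K - bondOp L x K' := by
  ext σ τ
  simp only [bondOp, Matrix.sub_apply]
  split_ifs <;> simp

lemma bondOp_smul {L x : ℕ} (c : ℂ) (K : Matrix (Fin 2 × Fin 2) (Fin 2 × Fin 2) ℂ) :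
    bondOp L x (c • K) = c • bondOp L x K := by
  ext σ τ
  simp only [bondOp, Matrix.smul_apply]
  split_ifs <;> simp

lemma off_iff_eq {L x : ℕ} (h : x + 1 < L) (σ τ : Config L) :
    σ = τ ↔ ((∀ y : Fin L, (y : ℕ) ≠ x → (y : ℕ) ≠ x + 1 → σ y = τ y) ∧
      σ ⟨x, by omega⟩ = τ ⟨x, by omega⟩ ∧ σ ⟨x+1, h⟩ = τ ⟨x+1, h⟩) := by
  constructor
  · rintro rfl; exact ⟨fun _ _ _ => rfl, rfl, rfl⟩
  · rintro ⟨hoff, h1, h2⟩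
    funext y
    by_cases hy1 : (y : ℕ) = x
    · have hy : y = ⟨x, by omega⟩ := Fin.ext hy1
      rw [hy]; exact h1
    · by_cases hy2 : (y : ℕ) = x + 1
      · have hy : y = ⟨x+1, h⟩ := Fin.ext hy2
        rw [hy]; exact h2
      · exact hoff y hy1 hy2

lemma bondOp_one {L x : ℕ} (h : x + 1 < L) :
    bondOp L x (1 : Matrix (Fin 2 × Fin 2) (Fin 2 × Fin 2) ℂ) = 1 := by
  ext σ τ
  rw [bondOp_apply h, Matrix.one_apply, Matrix.one_apply]
  by_cases hoff : ∀ y : Fin L, (y : ℕ) ≠ x → (y : ℕ) ≠ x + 1 → σ y = τ y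
  · rw [if_pos hoff]
    by_cases hp : ((σ ⟨x, by omega⟩, σ ⟨x+1, h⟩) : Fin 2 × Fin 2) = (τ ⟨x, by omega⟩, τ ⟨x+1, h⟩)
    · have hστ : σ = τ := by
        rw [off_iff_eq h]
        exact ⟨hoff, congrArg Prod.fst hp, congrArg Prod.snd hp⟩
      rw [if_pos hp, if_pos hστ]
    · have hστ : σ ≠ τ := fun hc => hp (by rw [hc])
      rw [if_neg hp, if_neg hστ]
  · have hστ : σ ≠ τ := fun hc => hoff (fun y _ _ => by rw [hc])
    rw [if_neg hoff, if_neg hστ]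

lemma bondOp_mul {L x : ℕ} (h : x + 1 < L) (K K' : Matrix (Fin 2 × Fin 2) (Fin 2 × Fin 2) ℂ) :
    bondOp L x K * bondOp L x K' = bondOp L x (K * K') := by
  ext σ τ
  rw [Matrix.mul_apply, bondOp_apply h]
  rw [sum_eq_sum_upd2 h σ (fun ρ => bondOp L x K σ ρ * bondOp L x K' ρ τ) (fun ρ hρ => by
    rw [bondOp_apply h K σ ρ, if_neg, zero_mul]
    intro hc
    exact hρ (fun y h1 h2 => (hc y h1 h2).symm))]
  have key : ∀ p : Fin 2 × Fin 2,
      bondOp L x K σ (upd2 h σ p) * bondOp L x K' (upd2 h σ p) τ =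
      (if ∀ y : Fin L, (y : ℕ) ≠ x → (y : ℕ) ≠ x + 1 → σ y = τ y then
        K (σ ⟨x, by omega⟩, σ ⟨x+1, h⟩) p * K' p (τ ⟨x, by omega⟩, τ ⟨x+1, h⟩) else 0) := by
    intro p
    rw [bondOp_apply h, bondOp_apply h, upd2_fst, upd2_snd,
      if_pos (fun y h1 h2 => (upd2_other h σ p y h1 h2).symm)]
    by_cases hoff : ∀ y : Fin L, (y : ℕ) ≠ x → (y : ℕ) ≠ x + 1 → σ y = τ y
    · rw [if_pos hoff, if_pos (fun y h1 h2 => (upd2_other h σ p y h1 h2).trans (hoff y h1 h2))]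
    · rw [if_neg hoff, if_neg, mul_zero]
      intro hc
      exact hoff fun y h1 h2 => (upd2_other h σ p y h1 h2).symm.trans (hc y h1 h2)
  rw [Finset.sum_congr rfl (fun p _ => key p)]
  by_cases hoff : ∀ y : Fin L, (y : ℕ) ≠ x → (y : ℕ) ≠ x + 1 → σ y = τ y
  · simp only [if_pos hoff, Matrix.mul_apply]
  · simp only [if_neg hoff, Finset.sum_const_zero]

lemma bondOp_conjTranspose {L x : ℕ} (h : x + 1 < L)
    (K : Matrix (Fin 2 × Fin 2) (Fin 2 × Fin 2) ℂ) :
    (bondOp L x K)ᴴ = bondOp L x Kᴴ := by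
  ext σ τ
  rw [Matrix.conjTranspose_apply, bondOp_apply h, bondOp_apply h]
  by_cases hoff : ∀ y : Fin L, (y : ℕ) ≠ x → (y : ℕ) ≠ x + 1 → σ y = τ y
  · rw [if_pos hoff, if_pos (fun y h1 h2 => (hoff y h1 h2).symm), Matrix.conjTranspose_apply]
  · rw [if_neg hoff, if_neg (fun hc => hoff fun y h1 h2 => (hc y h1 h2).symm), star_zero]

lemma siteOp_left {L x : ℕ} (h : x + 1 < L) (M : Matrix (Fin 2) (Fin 2) ℂ) :
    siteOp L M x = bondOp L x (two M 1) := by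
  have hx : x < L := by omega
  ext σ τ
  rw [bondOp_apply h]
  simp only [siteOp, dif_pos hx, two]
  by_cases hA : ∀ y : Fin L, (y : ℕ) ≠ x → σ y = τ y
  · have hB : ∀ y : Fin L, (y : ℕ) ≠ x → (y : ℕ) ≠ x + 1 → σ y = τ y := fun y h1 _ => hA y h1
    have hx1 : σ ⟨x+1, h⟩ = τ ⟨x+1, h⟩ := hA _ (by simp)
    rw [if_pos hA, if_pos hB, hx1, Matrix.one_apply_eq, mul_one]
  · rw [if_neg hA]
    by_cases hB : ∀ y : Fin L, (y : ℕ) ≠ x → (y : ℕ) ≠ x + 1 → σ y = τ y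
    · have hne : σ ⟨x+1, h⟩ ≠ τ ⟨x+1, h⟩ := by
        intro hc
        refine hA fun y hy => ?_
        by_cases h2 : (y : ℕ) = x + 1
        · have hy2 : y = ⟨x+1, h⟩ := Fin.ext h2
          rw [hy2]; exact hc
        · exact hB y hy h2
      rw [if_pos hB, Matrix.one_apply_ne hne, mul_zero]
    · rw [if_neg hB]

lemma siteOp_right {L x : ℕ} (h : x + 1 < L) (M : Matrix (Fin 2) (Fin 2) ℂ) :
    siteOp L M (x + 1) = bondOp L x (two 1 M) := by
  ext σ τ
  rw [bondOp_apply h]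
  simp only [siteOp, dif_pos h, two]
  by_cases hA : ∀ y : Fin L, (y : ℕ) ≠ x + 1 → σ y = τ y
  · have hB : ∀ y : Fin L, (y : ℕ) ≠ x → (y : ℕ) ≠ x + 1 → σ y = τ y := fun y _ h2 => hA y h2
    have hx0 : σ ⟨x, by omega⟩ = τ ⟨x, by omega⟩ := hA _ (by simp)
    rw [if_pos hA, if_pos hB, hx0, Matrix.one_apply_eq, one_mul]
  · rw [if_neg hA]
    by_cases hB : ∀ y : Fin L, (y : ℕ) ≠ x → (y : ℕ) ≠ x + 1 → σ y = τ y
    · have hne : σ ⟨x, by omega⟩ ≠ τ ⟨x, by omega⟩ := by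
        intro hc
        refine hA fun y hy => ?_
        by_cases h1 : (y : ℕ) = x
        · have hy1 : y = ⟨x, by omega⟩ := Fin.ext h1
          rw [hy1]; exact hc
        · exact hB y h1 hy
      rw [if_pos hB, Matrix.one_apply_ne hne, zero_mul]
    · rw [if_neg hB]

lemma two_mul_two (M N M' N' : Matrix (Fin 2) (Fin 2) ℂ) :
    two M N * two M' N' = two (M * M') (N * N') := by
  ext p p'
  simp only [two, Matrix.mul_apply, Fintype.sum_prod_type]
  rw [Finset.sum_mul_sum]
  exact Finset.sum_congr rfl fun e _ => Finset.sum_congr rfl fun f _ => by ring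

lemma mulVec_bondOp {L x : ℕ} (h : x + 1 < L) (K : Matrix (Fin 2 × Fin 2) (Fin 2 × Fin 2) ℂ)
    (ψ : Config L → ℂ) (σ : Config L) :
    (bondOp L x K *ᵥ ψ) σ =
      ∑ p : Fin 2 × Fin 2, K (σ ⟨x, by omega⟩, σ ⟨x+1, h⟩) p * ψ (upd2 h σ p) := by
  show ∑ ρ : Config L, bondOp L x K σ ρ * ψ ρ = _
  rw [sum_eq_sum_upd2 h σ (fun ρ => bondOp L x K σ ρ * ψ ρ) (fun ρ hρ => by
    rw [bondOp_apply h K σ ρ, if_neg, zero_mul]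
    intro hc
    exact hρ (fun y h1 h2 => (hc y h1 h2).symm))]
  refine Finset.sum_congr rfl fun p _ => ?_
  rw [bondOp_apply h, upd2_fst, upd2_snd,
    if_pos (fun y h1 h2 => (upd2_other h σ p y h1 h2).symm)]

lemma sum_mulVec {L : ℕ} {ι : Type*} (s : Finset ι) (M : ι → Matrix (Config L) (Config L) ℂ)
    (v : Config L → ℂ) : (∑ i ∈ s, M i) *ᵥ v = ∑ i ∈ s, M i *ᵥ v := by
  funext σ
  simp only [Matrix.mulVec, dotProduct, Finset.sum_apply, Matrix.sum_apply,
    Finset.sum_mul]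
  exact Finset.sum_comm

end KA

end

end KAux
section KAux2

open Matrix

noncomputable section

namespace KA

def uu (q : ℝ) : Fin 2 × Fin 2 → ℂ := fun p =>
  if p = (0,1) then (q : ℂ) else if p = (1,0) then -1 else 0

def uu' (q : ℝ) : Fin 2 × Fin 2 → ℂ := fun p =>
  if p = (0,1) then 1 else if p = (1,0) then -(q : ℂ) else 0

def hpmLoc (Δ : ℝ) : Matrix (Fin 2 × Fin 2) (Fin 2 × Fin 2) ℂ :=
  -((Δ⁻¹ : ℂ) • (two S1 S1 + two S2 S2) + (two S3 S3 - (1/4 : ℂ) • 1))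
    - (Acoef Δ : ℂ) • (two S3 1 - two 1 S3)

def hmpLoc (Δ : ℝ) : Matrix (Fin 2 × Fin 2) (Fin 2 × Fin 2) ℂ :=
  -((Δ⁻¹ : ℂ) • (two S1 S1 + two S2 S2) + (two S3 S3 - (1/4 : ℂ) • 1))
    + (Acoef Δ : ℂ) • (two S3 1 - two 1 S3)

def rmat (q : ℝ) (v : Fin 2 × Fin 2 → ℂ) : Matrix (Fin 2 × Fin 2) (Fin 2 × Fin 2) ℂ :=
  fun r p => if r = (0,0) then (((Real.sqrt (1+q^2))⁻¹ : ℝ) : ℂ) * v p else 0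

lemma scalar_facts {Δ q : ℝ} (hq0 : 0 < q) (hq1 : q < 1) (hΔ : Δ = (q + q⁻¹)/2) :
    ((Δ : ℂ))⁻¹ = 2*(q:ℂ)/(1+(q:ℂ)^2) ∧
    ((Acoef Δ : ℝ) : ℂ) = (1-(q:ℂ)^2)/(2*(1+(q:ℂ)^2)) := by
  have hΔr : Δ = (1+q^2)/(2*q) := by rw [hΔ]; field_simp; ring
  have hivR : Δ⁻¹ = 2*q/(1+q^2) := by rw [hΔr, inv_div]
  have hAR : Acoef Δ = (1-q^2)/(2*(1+q^2)) := by
    have h1 : 1 - Δ⁻¹^2 = ((1-q^2)/(1+q^2))^2 := by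
      rw [hivR]; field_simp; ring
    rw [Acoef, h1, Real.sqrt_sq (div_nonneg (by nlinarith) (by positivity))]
    have hne : (1:ℝ)+q^2 ≠ 0 := by positivity
    field_simp
  constructor
  · rw [← Complex.ofReal_inv, hivR]; push_cast; ring
  · rw [hAR]; push_cast; ring

lemma one_add_q_sq_ne {q : ℝ} (hq0 : 0 < q) : (1+(q:ℂ)^2) ≠ 0 := by
  intro hc
  have h2 : ((1+q^2 : ℝ) : ℂ) = 0 := by push_cast; exact hc
  rw [Complex.ofReal_eq_zero] at h2
  nlinarith

lemma hpmLoc_apply {Δ q : ℝ} (hq0 : 0 < q) (hq1 : q < 1) (hΔ : Δ = (q + q⁻¹)/2) :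
    ∀ p p', hpmLoc Δ p p' = (1+(q:ℂ)^2)⁻¹ * star (uu q p) * uu q p' := by
  obtain ⟨hiv, hA⟩ := scalar_facts hq0 hq1 hΔ
  have hne := one_add_q_sq_ne (q := q) hq0
  rintro ⟨a,b⟩ ⟨c,d⟩
  fin_cases a <;> fin_cases b <;> fin_cases c <;> fin_cases d <;>
    · simp [hpmLoc, two, uu, S1, S2, S3, Matrix.one_apply, hiv, hA, Matrix.smul_apply,
        Matrix.sub_apply, Matrix.add_apply, Matrix.neg_apply, Matrix.cons_val_zero,
        Matrix.cons_val_one, Matrix.head_cons, Prod.ext_iff]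
      try field_simp
      try simp only [Complex.I_sq, Complex.I_mul_I]
      try ring

lemma hmpLoc_apply {Δ q : ℝ} (hq0 : 0 < q) (hq1 : q < 1) (hΔ : Δ = (q + q⁻¹)/2) :
    ∀ p p', hmpLoc Δ p p' = (1+(q:ℂ)^2)⁻¹ * star (uu' q p) * uu' q p' := by
  obtain ⟨hiv, hA⟩ := scalar_facts hq0 hq1 hΔ
  have hne := one_add_q_sq_ne (q := q) hq0
  rintro ⟨a,b⟩ ⟨c,d⟩
  fin_cases a <;> fin_cases b <;> fin_cases c <;> fin_cases d <;>
    · simp [hmpLoc, two, uu', S1, S2, S3, Matrix.one_apply, hiv, hA, Matrix.smul_apply,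
        Matrix.sub_apply, Matrix.add_apply, Matrix.neg_apply, Matrix.cons_val_zero,
        Matrix.cons_val_one, Matrix.head_cons, Prod.ext_iff]
      try field_simp
      try simp only [Complex.I_sq, Complex.I_mul_I]
      try ring

lemma rmat_fact {q : ℝ} (hq0 : 0 < q) (v : Fin 2 × Fin 2 → ℂ) (p p' : Fin 2 × Fin 2) :
    ((rmat q v)ᴴ * rmat q v) p p' = (1+(q:ℂ)^2)⁻¹ * star (v p) * v p' := by
  have hs : ((((Real.sqrt (1+q^2))⁻¹ : ℝ)) : ℂ) * (((Real.sqrt (1+q^2))⁻¹ : ℝ) : ℂ)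
      = (1+(q:ℂ)^2)⁻¹ := by
    rw [← Complex.ofReal_mul, ← mul_inv, Real.mul_self_sqrt (by positivity)]
    push_cast
    ring
  rw [Matrix.mul_apply]
  have e1 : ∀ (w : Fin 2 × Fin 2 → ℂ) (p0 : Fin 2 × Fin 2),
      rmat q w (0,0) p0 = (((Real.sqrt (1+q^2))⁻¹ : ℝ) : ℂ) * w p0 := by
    intro w p0
    show (if ((0,0) : Fin 2 × Fin 2) = (0,0) then _ else (0:ℂ)) = _
    rw [if_pos rfl]
  rw [Fintype.sum_eq_single ((0,0) : Fin 2 × Fin 2)]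
  · rw [Matrix.conjTranspose_apply, e1, e1]
    rw [star_mul', Complex.star_def, Complex.conj_ofReal]
    linear_combination ((starRingEnd ℂ) (v p) * v p') * hs
  · intro r hr
    have e0 : ∀ p0 : Fin 2 × Fin 2, rmat q v r p0 = 0 := by
      intro p0
      show (if r = (0,0) then _ else (0:ℂ)) = _
      rw [if_neg hr]
    rw [Matrix.conjTranspose_apply, e0, e0, star_zero, zero_mul]

end KA

end

end KAux2
section KAux3

open Matrix

noncomputable section

namespace KA

lemma downSets {L x : ℕ} (h : x + 1 < L) (σ : Config L) :
    ∃ E : Finset (Fin L),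
      (⟨x, by omega⟩ : Fin L) ∉ E ∧ (⟨x+1, h⟩ : Fin L) ∉ E ∧
      downSet (upd2 h σ ((0 : Fin 2), (1 : Fin 2))) = insert ⟨x+1, h⟩ E ∧
      downSet (upd2 h σ ((1 : Fin 2), (0 : Fin 2))) = insert ⟨x, by omega⟩ E := by
  refine ⟨(downSet (upd2 h σ ((0 : Fin 2), (1 : Fin 2)))).erase ⟨x+1, h⟩, ?_, ?_, ?_, ?_⟩
  · intro hc
    have hc2 := Finset.mem_of_mem_erase hc
    simp only [downSet, Finset.mem_filter, Finset.mem_univ, true_and] at hc2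
    rw [upd2_fst] at hc2
    exact absurd hc2 (by decide)
  · exact Finset.notMem_erase _ _
  · refine (Finset.insert_erase ?_).symm
    simp only [downSet, Finset.mem_filter, Finset.mem_univ, true_and]
    rw [upd2_snd]
  · ext i
    simp only [downSet, Finset.mem_filter, Finset.mem_univ, true_and, Finset.mem_insert,
      Finset.mem_erase]
    constructor
    · intro hi
      by_cases h1 : (i : ℕ) = x
      · left; exact Fin.ext h1
      · right
        by_cases h2 : (i : ℕ) = x + 1
        · exfalso
          have hi2 : i = ⟨x+1, h⟩ := Fin.ext h2
          rw [hi2, upd2_snd] at hi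
          exact absurd hi (by decide)
        · refine ⟨fun hc => h2 (by rw [hc]), ?_⟩
          rw [upd2_other h σ _ i h1 h2]
          rw [upd2_other h σ _ i h1 h2] at hi
          exact hi
    · rintro (rfl | ⟨hne, hi⟩)
      · rw [upd2_fst]
      · by_cases h1 : (i : ℕ) = x
        · exfalso
          have hi2 : i = ⟨x, by omega⟩ := Fin.ext h1
          rw [hi2, upd2_fst] at hi
          exact absurd hi (by decide)
        · by_cases h2 : (i : ℕ) = x + 1
          · exact absurd (Fin.ext h2) hne
          · rw [upd2_other h σ _ i h1 h2]
            rw [upd2_other h σ _ i h1 h2] at hi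
            exact hi

lemma kink_step {L x : ℕ} (h : x + 1 < L) (q : ℝ) (n : ℕ) (σ : Config L) :
    kink L q n (upd2 h σ ((1 : Fin 2), (0 : Fin 2)))
      = q * kink L q n (upd2 h σ ((0 : Fin 2), (1 : Fin 2))) := by
  obtain ⟨E, hxE, hx1E, h01, h10⟩ := downSets h σ
  have hcard : (downSet (upd2 h σ ((1 : Fin 2), (0 : Fin 2)))).card
      = (downSet (upd2 h σ ((0 : Fin 2), (1 : Fin 2)))).card := by
    rw [h01, h10, Finset.card_insert_of_notMem hxE, Finset.card_insert_of_notMem hx1E]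
  have hsum : ∑ i ∈ downSet (upd2 h σ ((1 : Fin 2), (0 : Fin 2))), (L - (i : ℕ))
      = (∑ i ∈ downSet (upd2 h σ ((0 : Fin 2), (1 : Fin 2))), (L - (i : ℕ))) + 1 := by
    rw [h01, h10, Finset.sum_insert hxE, Finset.sum_insert hx1E]
    show L - x + _ = L - (x+1) + _ + 1
    omega
  unfold kink
  rw [hcard, hsum]
  by_cases hc : (downSet (upd2 h σ ((0 : Fin 2), (1 : Fin 2)))).card = n
  · rw [if_pos hc, if_pos hc, pow_succ]; ring
  · rw [if_neg hc, if_neg hc, mul_zero]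

lemma antikink_step {L x : ℕ} (h : x + 1 < L) (q : ℝ) (n : ℕ) (σ : Config L) :
    antikink L q n (upd2 h σ ((0 : Fin 2), (1 : Fin 2)))
      = q * antikink L q n (upd2 h σ ((1 : Fin 2), (0 : Fin 2))) := by
  obtain ⟨E, hxE, hx1E, h01, h10⟩ := downSets h σ
  have hcard : (downSet (upd2 h σ ((0 : Fin 2), (1 : Fin 2)))).card
      = (downSet (upd2 h σ ((1 : Fin 2), (0 : Fin 2)))).card := by
    rw [h01, h10, Finset.card_insert_of_notMem hxE, Finset.card_insert_of_notMem hx1E]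
  have hsum : ∑ i ∈ downSet (upd2 h σ ((0 : Fin 2), (1 : Fin 2))), ((i : ℕ) + 1)
      = (∑ i ∈ downSet (upd2 h σ ((1 : Fin 2), (0 : Fin 2))), ((i : ℕ) + 1)) + 1 := by
    rw [h01, h10, Finset.sum_insert hxE, Finset.sum_insert hx1E]
    show (x + 1) + 1 + _ = x + 1 + _ + 1
    omega
  unfold antikink
  rw [hcard, hsum]
  by_cases hc : (downSet (upd2 h σ ((1 : Fin 2), (0 : Fin 2)))).card = n
  · rw [if_pos hc, if_pos hc, pow_succ]; ring
  · rw [if_neg hc, if_neg hc, mul_zero]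

lemma two_split (M N : Matrix (Fin 2) (Fin 2) ℂ) : two M N = two M 1 * two 1 N := by
  rw [two_mul_two, mul_one, one_mul]

lemma Hpm_eq {L : ℕ} (hL : 2 ≤ L) (Δ : ℝ) :
    Hpm L Δ = ∑ x ∈ Finset.range (L-1), bondOp L x (hpmLoc Δ) := by
  have htel : siteOp L S3 0 - siteOp L S3 (L-1)
      = ∑ x ∈ Finset.range (L-1), (siteOp L S3 x - siteOp L S3 (x+1)) :=
    (Finset.sum_range_sub' (fun x => siteOp L S3 x) (L-1)).symm
  rw [Hpm, XXZbulk, htel, Finset.smul_sum, ← Finset.sum_neg_distrib, ← Finset.sum_sub_distrib]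
  refine Finset.sum_congr rfl fun x hx => ?_
  have h : x + 1 < L := by
    have := Finset.mem_range.mp hx; omega
  conv_rhs => rw [hpmLoc, two_split S1 S1, two_split S2 S2, two_split S3 S3]
  rw [bondOp_sub, bondOp_neg, bondOp_add, bondOp_smul, bondOp_smul, bondOp_add, bondOp_sub,
    bondOp_smul, bondOp_one h, bondOp_sub, ← bondOp_mul h, ← bondOp_mul h, ← bondOp_mul h,
    ← siteOp_left h S1, ← siteOp_right h S1, ← siteOp_left h S2, ← siteOp_right h S2,
    ← siteOp_left h S3, ← siteOp_right h S3]

lemma Hmp_eq {L : ℕ} (hL : 2 ≤ L) (Δ : ℝ) :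
    Hmp L Δ = ∑ x ∈ Finset.range (L-1), bondOp L x (hmpLoc Δ) := by
  have htel : siteOp L S3 0 - siteOp L S3 (L-1)
      = ∑ x ∈ Finset.range (L-1), (siteOp L S3 x - siteOp L S3 (x+1)) :=
    (Finset.sum_range_sub' (fun x => siteOp L S3 x) (L-1)).symm
  rw [Hmp, XXZbulk, htel, Finset.smul_sum, ← Finset.sum_neg_distrib, ← Finset.sum_add_distrib]
  refine Finset.sum_congr rfl fun x hx => ?_
  have h : x + 1 < L := by
    have := Finset.mem_range.mp hx; omega
  conv_rhs => rw [hmpLoc, two_split S1 S1, two_split S2 S2, two_split S3 S3]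
  rw [bondOp_add, bondOp_neg, bondOp_add, bondOp_smul, bondOp_smul, bondOp_add, bondOp_sub,
    bondOp_smul, bondOp_one h, bondOp_sub, ← bondOp_mul h, ← bondOp_mul h, ← bondOp_mul h,
    ← siteOp_left h S1, ← siteOp_right h S1, ← siteOp_left h S2, ← siteOp_right h S2,
    ← siteOp_left h S3, ← siteOp_right h S3]

lemma bond_annihilate {L x : ℕ} (h : x + 1 < L) (K : Matrix (Fin 2 × Fin 2) (Fin 2 × Fin 2) ℂ)
    (c : ℂ) (v : Fin 2 × Fin 2 → ℂ)
    (hK : ∀ b p, K b p = c * star (v b) * v p)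
    (hv00 : v (0,0) = 0) (hv11 : v (1,1) = 0)
    (ψ : Config L → ℂ)
    (hψ : ∀ σ : Config L, v (0,1) * ψ (upd2 h σ (0,1)) + v (1,0) * ψ (upd2 h σ (1,0)) = 0) :
    bondOp L x K *ᵥ ψ = 0 := by
  funext σ
  rw [mulVec_bondOp h, Pi.zero_apply]
  have key : ∀ p : Fin 2 × Fin 2, K (σ ⟨x, by omega⟩, σ ⟨x+1, h⟩) p * ψ (upd2 h σ p)
      = (c * star (v (σ ⟨x, by omega⟩, σ ⟨x+1, h⟩))) * (v p * ψ (upd2 h σ p)) := by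
    intro p; rw [hK]; ring
  have hzero : (∑ p : Fin 2 × Fin 2, v p * ψ (upd2 h σ p)) = 0 := by
    rw [Fintype.sum_prod_type, Fin.sum_univ_two, Fin.sum_univ_two, Fin.sum_univ_two,
      hv00, hv11, zero_mul, zero_mul, zero_add, add_zero]
    exact hψ σ
  rw [Finset.sum_congr rfl fun p _ => key p, ← Finset.mul_sum, hzero, mul_zero]

end KA

end

end KAux3
open Matrix in
/-- the kink state `ψ^{+-}_{[1,L]}(n)` is a ground state of the XXZ
Hamiltonian with kink boundary fields: `H^{+-}_{[1,L]}` is positive semidefinite and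
annihilates it; similarly for the antikink state and `H^{-+}_{[1,L]}`. -/
theorem kink_antikink_ground_states
    (L : ℕ) (hL : 2 ≤ L) (Δ q : ℝ) (hq0 : 0 < q) (hq1 : q < 1)
    (hΔ : Δ = (q + q⁻¹) / 2) (n : ℕ) (hn : n ≤ L) :
    (Hpm L Δ).PosSemidef ∧ Hpm L Δ *ᵥ kink L q n = 0 ∧
    (Hmp L Δ).PosSemidef ∧ Hmp L Δ *ᵥ antikink L q n = 0 := by
  have hpmE := KA.hpmLoc_apply hq0 hq1 hΔ
  have hmpE := KA.hmpLoc_apply hq0 hq1 hΔ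
  have hpmFact : KA.hpmLoc Δ = (KA.rmat q (KA.uu q))ᴴ * KA.rmat q (KA.uu q) := by
    ext p p'; rw [hpmE p p', KA.rmat_fact hq0]
  have hmpFact : KA.hmpLoc Δ = (KA.rmat q (KA.uu' q))ᴴ * KA.rmat q (KA.uu' q) := by
    ext p p'; rw [hmpE p p', KA.rmat_fact hq0]
  refine ⟨?_, ?_, ?_, ?_⟩
  · rw [KA.Hpm_eq hL Δ]
    refine Finset.sum_induction _ _ (fun a b ha hb => ha.add hb) Matrix.PosSemidef.zero ?_
    intro x hx
    have h : x + 1 < L := by have := Finset.mem_range.mp hx; omega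
    rw [hpmFact, ← KA.bondOp_mul h, ← KA.bondOp_conjTranspose h]
    exact Matrix.posSemidef_conjTranspose_mul_self _
  · rw [KA.Hpm_eq hL Δ, KA.sum_mulVec]
    refine Finset.sum_eq_zero fun x hx => ?_
    have h : x + 1 < L := by have := Finset.mem_range.mp hx; omega
    refine KA.bond_annihilate h _ _ (KA.uu q) hpmE (by simp [KA.uu, Prod.ext_iff]) (by simp [KA.uu, Prod.ext_iff]) _ ?_
    intro σ
    have h1 : KA.uu q ((0 : Fin 2), (1 : Fin 2)) = (q : ℂ) := by simp [KA.uu]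
    have h2 : KA.uu q ((1 : Fin 2), (0 : Fin 2)) = -1 := by simp [KA.uu]
    rw [h1, h2, KA.kink_step h q n σ]
    ring
  · rw [KA.Hmp_eq hL Δ]
    refine Finset.sum_induction _ _ (fun a b ha hb => ha.add hb) Matrix.PosSemidef.zero ?_
    intro x hx
    have h : x + 1 < L := by have := Finset.mem_range.mp hx; omega
    rw [hmpFact, ← KA.bondOp_mul h, ← KA.bondOp_conjTranspose h]
    exact Matrix.posSemidef_conjTranspose_mul_self _
  · rw [KA.Hmp_eq hL Δ, KA.sum_mulVec]
    refine Finset.sum_eq_zero fun x hx => ?_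
    have h : x + 1 < L := by have := Finset.mem_range.mp hx; omega
    refine KA.bond_annihilate h _ _ (KA.uu' q) hmpE (by simp [KA.uu', Prod.ext_iff]) (by simp [KA.uu', Prod.ext_iff]) _ ?_
    intro σ
    have h1 : KA.uu' q ((0 : Fin 2), (1 : Fin 2)) = 1 := by simp [KA.uu']
    have h2 : KA.uu' q ((1 : Fin 2), (0 : Fin 2)) = -(q : ℂ) := by simp [KA.uu']
    rw [h1, h2, KA.antikink_step h q n σ]
    ring
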